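/- For every complex x with x ∉ {0, −1, −2, …} and every natural number l > n, the Taylor coefficient c_l^{(n)} of (1−z)^n ln(1−z) = ∑_{l≥1} c_l^{(n)} z^l satisfies c_l^{(n)} = −(1/l)·(−1)^n·Γ(1+n)Γ(l−n)/Γ(l) = −(1/l)·(−1)^n·n!/((l−1)(l−2)⋯(l−n)). -/

import Mathlib

open Real

open Set

private lemma myIDW_open {f : ℝ → ℝ} {s : Set ℝ} (hs : IsOpen s) {x : ℝ} (hx : x ∈ s) (n : ℕ) :
    iteratedDerivWithin n f s x = iteratedDeriv n f x := by
  simp only [iteratedDerivWithin, iteratedDeriv, iteratedFDerivWithin_of_isOpen n hs hx]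

private lemma myPolyZero (m : ℕ) : ∀ (k : ℕ), m < k → ∀ z : ℝ,
    iteratedDeriv k (fun z : ℝ => (1 - z) ^ m) z = 0 := by
  induction m with
  | zero =>
    intro k hk z
    have hzero : ∀ (j : ℕ) (w : ℝ), iteratedDeriv j (fun _ : ℝ => (0:ℝ)) w = 0 := by
      intro j
      induction j with
      | zero => simp [iteratedDeriv_zero]
      | succ j ih =>
        intro w
        rw [iteratedDeriv_succ']
        have : deriv (fun _ : ℝ => (0:ℝ)) = fun _ : ℝ => (0:ℝ) := by
          funext t; simp
        rw [this]; exact ih w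
    obtain ⟨k, rfl⟩ := Nat.exists_eq_succ_of_ne_zero (Nat.ne_zero_of_lt hk)
    rw [iteratedDeriv_succ']
    have : deriv (fun z : ℝ => (1 - z) ^ 0) = fun _ : ℝ => (0:ℝ) := by
      funext t; simp
    rw [this]; exact hzero k z
  | succ m ih =>
    intro k hk z
    obtain ⟨k, rfl⟩ := Nat.exists_eq_succ_of_ne_zero (Nat.ne_zero_of_lt (Nat.lt_of_le_of_lt (Nat.zero_le _) hk))
    rw [iteratedDeriv_succ']
    have hd : deriv (fun z : ℝ => (1 - z) ^ (m + 1))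
        = fun z : ℝ => -((m:ℝ) + 1) * (1 - z) ^ m := by
      funext t
      have h0 : HasDerivAt (fun z : ℝ => 1 - z) (-1) t := (hasDerivAt_id t).const_sub 1
      have := (h0.fun_pow (m + 1)).deriv
      simp only [Nat.add_sub_cancel] at this
      rw [this]; push_cast; ring
    rw [hd]
    have : iteratedDeriv k (fun z : ℝ => -((m:ℝ) + 1) * (1 - z) ^ m) z
        = -((m:ℝ) + 1) * iteratedDeriv k (fun z : ℝ => (1 - z) ^ m) z := by
      simp_rw [← iteratedDerivWithin_univ]
      exact iteratedDerivWithin_const_mul (mem_univ z) uniqueDiffOn_univ _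
        ((contDiff_const.sub contDiff_id).pow m).contDiffWithinAt
    rw [this, ih k (Nat.succ_lt_succ_iff.mp hk) z, mul_zero]

private lemma myContF (n : ℕ) (m : ℕ) :
    ContDiffOn ℝ m (fun z : ℝ => (1 - z) ^ n * Real.log (1 - z)) (Iio (1:ℝ)) := by
  apply ContDiffOn.mul
  · exact ((contDiff_const.sub contDiff_id).pow n).contDiffOn
  · exact ContDiffOn.log (contDiff_const.sub contDiff_id).contDiffOn
      (fun z hz => by have h : z < 1 := hz; intro hc; rw [sub_eq_zero] at hc; exact absurd hc.symm h.ne)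

private lemma myDerivF (n : ℕ) {z : ℝ} (hz : z < 1) :
    deriv (fun z : ℝ => (1 - z) ^ (n + 1) * Real.log (1 - z)) z
      = -((n:ℝ) + 1) * ((1 - z) ^ n * Real.log (1 - z)) + -(1 - z) ^ n := by
  have h1z : (0:ℝ) < 1 - z := by linarith
  have h0 : HasDerivAt (fun z : ℝ => 1 - z) (-1) z := (hasDerivAt_id z).const_sub 1
  have hp : HasDerivAt (fun z : ℝ => (1 - z) ^ (n + 1))
      (((n:ℝ) + 1) * (1 - z) ^ n * (-1)) z := by
    have := h0.fun_pow (n + 1)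
    simpa [Nat.add_sub_cancel] using this
  have hl : HasDerivAt (fun z : ℝ => Real.log (1 - z)) (-1 / (1 - z)) z :=
    h0.log h1z.ne'
  have := (hp.fun_mul hl).deriv
  rw [this, pow_succ]
  field_simp

private lemma myClaimA (n : ℕ) : ∀ z ∈ Iio (1:ℝ),
    iteratedDerivWithin (n + 1) (fun z : ℝ => (1 - z) ^ n * Real.log (1 - z)) (Iio 1) z
      = -((-1:ℝ) ^ n * n.factorial) * (1 - z)⁻¹ := by
  have hs : IsOpen (Iio (1:ℝ)) := isOpen_Iio
  have hu : UniqueDiffOn ℝ (Iio (1:ℝ)) := hs.uniqueDiffOn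
  induction n with
  | zero =>
    intro z hz
    have h1z : (0:ℝ) < 1 - z := by linarith [mem_Iio.mp hz]
    rw [iteratedDerivWithin_one, derivWithin_of_isOpen hs hz]
    have h0 : HasDerivAt (fun z : ℝ => 1 - z) (-1) z := (hasDerivAt_id z).const_sub 1
    have hl : HasDerivAt (fun z : ℝ => (1 - z) ^ 0 * Real.log (1 - z)) (-1 / (1 - z)) z := by
      have := h0.log h1z.ne'
      apply this.congr_of_eventuallyEq
      filter_upwards with t; simp
    rw [hl.deriv]
    norm_num
    rw [div_eq_mul_inv, neg_mul, one_mul]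
  | succ n ih =>
    intro z hz
    rw [iteratedDerivWithin_succ']
    have hcong : Set.EqOn
        (derivWithin (fun z : ℝ => (1 - z) ^ (n+1) * Real.log (1 - z)) (Iio 1))
        (fun z : ℝ => -((n:ℝ) + 1) * ((1 - z) ^ n * Real.log (1 - z)) + -(1 - z) ^ n)
        (Iio 1) := by
      intro t ht
      rw [derivWithin_of_isOpen hs ht, myDerivF n (mem_Iio.mp ht)]
    rw [iteratedDerivWithin_congr hcong hz]
    have hadd : iteratedDerivWithin (n+1)
        (fun z : ℝ => -((n:ℝ) + 1) * ((1 - z) ^ n * Real.log (1 - z)) + -(1 - z) ^ n) (Iio 1) z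
        = iteratedDerivWithin (n+1)
            (fun z : ℝ => -((n:ℝ) + 1) * ((1 - z) ^ n * Real.log (1 - z))) (Iio 1) z
          + iteratedDerivWithin (n+1) (fun z : ℝ => -(1 - z) ^ n) (Iio 1) z := by
      exact iteratedDerivWithin_add hz hu
        ((myContF n (n+1)).const_smul (-((n:ℝ)+1)) z hz)
        (((contDiff_const.sub contDiff_id).pow n).neg.contDiffWithinAt)
    rw [hadd]
    have hmul : iteratedDerivWithin (n+1)
        (fun z : ℝ => -((n:ℝ) + 1) * ((1 - z) ^ n * Real.log (1 - z))) (Iio 1) z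
        = -((n:ℝ) + 1) * iteratedDerivWithin (n+1)
            (fun z : ℝ => (1 - z) ^ n * Real.log (1 - z)) (Iio 1) z :=
      iteratedDerivWithin_const_mul hz hu _ (myContF n (n+1) z hz)
    have hpoly : iteratedDerivWithin (n+1) (fun z : ℝ => -(1 - z) ^ n) (Iio 1) z = 0 := by
      rw [iteratedDerivWithin_fun_neg]
      rw [myIDW_open hs hz, myPolyZero n (n+1) (Nat.lt_succ_self n) z, neg_zero]
    rw [hmul, hpoly, ih z hz, add_zero, Nat.factorial_succ]
    push_cast
    ring

private lemma myClaimB (n k : ℕ) : ∀ z ∈ Iio (1:ℝ),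
    iteratedDerivWithin (n + 1 + k) (fun z : ℝ => (1 - z) ^ n * Real.log (1 - z)) (Iio 1) z
      = -((-1:ℝ) ^ n * n.factorial * k.factorial) * ((1 - z)⁻¹) ^ (k + 1) := by
  have hs : IsOpen (Iio (1:ℝ)) := isOpen_Iio
  have hu : UniqueDiffOn ℝ (Iio (1:ℝ)) := hs.uniqueDiffOn
  induction k with
  | zero =>
    intro z hz
    simpa using myClaimA n z hz
  | succ k ih =>
    intro z hz
    have h1z : (0:ℝ) < 1 - z := by linarith [mem_Iio.mp hz]
    have hstep : n + 1 + (k + 1) = (n + 1 + k) + 1 := by ring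
    rw [hstep, iteratedDerivWithin_succ,
      derivWithin_of_isOpen hs hz]
    have hev : iteratedDerivWithin (n + 1 + k)
        (fun z : ℝ => (1 - z) ^ n * Real.log (1 - z)) (Iio 1)
        =ᶠ[nhds z] fun z : ℝ =>
          -((-1:ℝ) ^ n * n.factorial * k.factorial) * ((1 - z)⁻¹) ^ (k + 1) := by
      filter_upwards [hs.mem_nhds hz] with t ht
      exact ih t ht
    rw [hev.deriv_eq]
    have h0 : HasDerivAt (fun z : ℝ => 1 - z) (-1) z := (hasDerivAt_id z).const_sub 1
    have hinv : HasDerivAt (fun z : ℝ => (1 - z)⁻¹) (((1 - z)⁻¹) ^ 2) z := by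
      have : HasDerivAt (fun y : ℝ => (1 - y)⁻¹) (- -1 / (1 - z) ^ 2) z := h0.inv h1z.ne'
      convert this using 1
      rw [neg_neg, one_div, inv_pow]
    have hpow : HasDerivAt (fun z : ℝ => ((1 - z)⁻¹) ^ (k + 1))
        (((k:ℝ) + 1) * ((1 - z)⁻¹) ^ k * (((1 - z)⁻¹) ^ 2)) z := by
      have := hinv.fun_pow (k + 1)
      simpa [Nat.add_sub_cancel] using this
    have hfin : HasDerivAt (fun z : ℝ =>
        -((-1:ℝ) ^ n * n.factorial * k.factorial) * ((1 - z)⁻¹) ^ (k + 1))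
        (-((-1:ℝ) ^ n * n.factorial * (k+1).factorial) * ((1 - z)⁻¹) ^ (k + 1 + 1)) z := by
      have : HasDerivAt (fun y : ℝ => -((-1:ℝ) ^ n * n.factorial * k.factorial) * ((1 - y)⁻¹) ^ (k + 1))
          (-((-1:ℝ) ^ n * n.factorial * k.factorial) * (((k:ℝ) + 1) * ((1 - z)⁻¹) ^ k * (((1 - z)⁻¹) ^ 2))) z :=
        hpow.const_mul (-((-1:ℝ) ^ n * n.factorial * k.factorial))
      convert this using 1
      rw [Nat.factorial_succ]
      push_cast
      ring
    exact hfin.deriv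

theorem taylor_coeff_formula' (n l : ℕ) (h : n < l) :
    iteratedDeriv l (fun z : ℝ => (1 - z) ^ n * Real.log (1 - z)) 0
      = -((-1:ℝ) ^ n * n.factorial * (l - n - 1).factorial) := by
  have hs : IsOpen (Iio (1:ℝ)) := isOpen_Iio
  have hz : (0:ℝ) ∈ Iio (1:ℝ) := by norm_num
  have hl : n + 1 + (l - n - 1) = l := by omega
  have := myClaimB n (l - n - 1) 0 hz
  rw [hl] at this
  rw [← myIDW_open hs hz, this]
  norm_num

/-- The l-th Taylor coefficient about 0 of (1-z)^n · ln(1-z). -/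
noncomputable def cCoeff (n l : ℕ) : ℝ :=
  iteratedDeriv l (fun z : ℝ => (1 - z) ^ n * Real.log (1 - z)) 0 / Nat.factorial l

theorem taylor_coeff_formula (x : ℂ) (hx : ∀ k : ℕ, x ≠ -(k : ℂ)) (n l : ℕ) (h : n < l) :
    cCoeff n l =
      -(1 / l) * (-1) ^ n * Gamma (1 + n) * Gamma ((l : ℝ) - n) / Gamma l := by
  have hG1 : Gamma (1 + (n:ℝ)) = n.factorial := by
    rw [add_comm]; exact_mod_cast Real.Gamma_nat_eq_factorial n
  have hG2 : Gamma ((l:ℝ) - n) = (l - n - 1).factorial := by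
    have h1 : (l:ℝ) - n = ((l - n - 1 : ℕ) : ℝ) + 1 := by
      push_cast [Nat.cast_sub h.le, Nat.cast_sub (show 1 ≤ l - n by omega)]
      ring
    rw [h1]
    exact_mod_cast Real.Gamma_nat_eq_factorial (l - n - 1)
  have hG3 : Gamma (l:ℝ) = (l - 1).factorial := by
    have h1 : (l:ℝ) = ((l - 1 : ℕ) : ℝ) + 1 := by
      push_cast [Nat.cast_sub (show 1 ≤ l by omega)]
      ring
    rw [h1]
    exact_mod_cast Real.Gamma_nat_eq_factorial (l - 1)
  have hfacn : l.factorial = l * (l - 1).factorial := by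
    conv_lhs => rw [show l = l - 1 + 1 from by omega]
    rw [Nat.factorial_succ]
    congr 1
    omega
  have hfac : (l.factorial : ℝ) = l * (l - 1).factorial := by
    exact_mod_cast hfacn
  rw [cCoeff, taylor_coeff_formula' n l h, hG1, hG2, hG3, hfac]
  have hl0 : (l:ℝ) ≠ 0 := Nat.cast_ne_zero.mpr (by omega)
  have hf0 : ((l-1).factorial : ℝ) ≠ 0 := Nat.cast_ne_zero.mpr (Nat.factorial_ne_zero _)
  field_simp
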